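/- Let u₁,…,u_n be i.i.d. Bernoulli(α) random variables (0 < α ≤ 1), β₁,…,β_n i.i.d. random variables with 0 < β_min ≤ β_k ≤ β_max almost surely and E[β_k] = ϖ, h₁,…,h_n i.i.d. standard exponential random variables, and p₁,…,p_n i.i.d. random variables taking values in [0,1] with E[p_k] = q, where all four families are mutually independent. Let I = Σ_{k=1}^n u_k β_k h_k p_k. Then for every s ≥ 0, E[ e^{-s I} ] ≤ exp( − n α ϖ q s / (1 + β_max s) ). -/

import Mathlib

open MeasureTheory ProbabilityTheory Real

section Helpers
open Set ENNReal

lemma one_div_bound {t M : ℝ} (ht : 0 ≤ t) (htM : t ≤ M) : (1+t)⁻¹ ≤ 1 - t/(1+M) := by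
  have h1 : (0:ℝ) < 1 + t := by linarith
  have h2 : (0:ℝ) < 1 + M := by linarith
  have e : (1+t)⁻¹ = 1 - t/(1+t) := by field_simp; ring
  rw [e]
  gcongr

lemma bern_compl {α : ℝ} :
    (((ENNReal.ofReal (1-α)) • Measure.dirac (0:ℝ) + (ENNReal.ofReal α) • Measure.dirac 1 :
      Measure ℝ)) (({0,1} : Set ℝ)ᶜ) = 0 := by
  have hm : MeasurableSet (({0,1} : Set ℝ)ᶜ) := (by measurability : MeasurableSet ({0,1}:Set ℝ)).compl
  simp [Measure.dirac_apply' _ hm]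

lemma bern_integrable {c : ℝ≥0∞} (hc : c ≠ ⊤) (x : ℝ) :
    Integrable (id : ℝ → ℝ) (c • Measure.dirac x) := by
  refine Integrable.smul_measure ?_ hc
  refine ⟨stronglyMeasurable_id.aestronglyMeasurable, ?_⟩
  rw [hasFiniteIntegral_iff_norm, lintegral_dirac]
  exact ENNReal.ofReal_lt_top

lemma bern_integral {α : ℝ} (h0 : 0 ≤ α) :
    ∫ x, x ∂((ENNReal.ofReal (1-α)) • Measure.dirac (0:ℝ) + (ENNReal.ofReal α) • Measure.dirac 1)
      = α := by
  rw [show (fun x : ℝ => x) = id from rfl,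
    integral_add_measure (bern_integrable ENNReal.ofReal_ne_top 0)
    (bern_integrable ENNReal.ofReal_ne_top 1)]
  rw [integral_smul_measure, integral_smul_measure, integral_dirac, integral_dirac]
  simp [ENNReal.toReal_ofReal h0]

lemma expMeasure_eq : expMeasure 1 = volume.withDensity (exponentialPDF 1) := rfl

lemma mgf_exp {c : ℝ} (hc : 0 ≤ c) :
    ∫ x, rexp (-(c * x)) ∂(expMeasure 1) = (1 + c)⁻¹ := by
  have hb : 0 < 1 + c := by linarith
  have hmeasPDF : Measurable (exponentialPDF 1) :=
    (measurable_exponentialPDFReal 1).ennreal_ofReal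
  have hcont : Continuous fun x : ℝ => rexp (-(c * x)) := by continuity
  rw [integral_eq_lintegral_of_nonneg_ae (ae_of_all _ fun x => (exp_pos _).le)
    hcont.aestronglyMeasurable]
  rw [expMeasure_eq, lintegral_withDensity_eq_lintegral_mul _ hmeasPDF
    (by fun_prop : Measurable fun x : ℝ => ENNReal.ofReal (rexp (-(c * x))))]
  have key : (∫⁻ x, (exponentialPDF 1 * fun x => ENNReal.ofReal (rexp (-(c * x)))) x)
      = ∫⁻ x in Ici (0:ℝ), ENNReal.ofReal (rexp (-((1 + c) * x))) := by
    rw [← lintegral_indicator measurableSet_Ici _]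
    congr 1
    funext x
    simp only [Pi.mul_apply, exponentialPDF_eq, indicator]
    by_cases hx : 0 ≤ x
    · rw [if_pos hx, if_pos (mem_Ici.mpr hx), ← ENNReal.ofReal_mul (by positivity)]
      congr 1
      rw [one_mul, one_mul, ← Real.exp_add]
      ring_nf
    · rw [if_neg hx, if_neg (by simpa using hx), ENNReal.ofReal_zero, zero_mul]
  rw [key]
  have hint : IntegrableOn (fun x => rexp (-((1 + c) * x))) (Ici (0:ℝ)) := by
    rw [integrableOn_Ici_iff_integrableOn_Ioi]
    simpa only [neg_mul] using exp_neg_integrableOn_Ioi 0 hb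
  rw [← ofReal_integral_eq_lintegral_ofReal hint (ae_of_all _ fun x => (exp_pos _).le)]
  rw [integral_Ici_eq_integral_Ioi]
  have : ∫ x in Ioi (0:ℝ), rexp (-((1+c) * x)) = (1+c)⁻¹ := by
    have := MeasureTheory.integral_comp_mul_left_Ioi (fun y => rexp (-y)) 0 hb
    simp only [mul_zero, smul_eq_mul] at this
    rw [this, integral_exp_neg_Ioi]
    simp
  rw [this, ENNReal.toReal_ofReal (by positivity)]

lemma per_term {Ω : Type*} [MeasurableSpace Ω] (μ : Measure Ω) [IsProbabilityMeasure μ]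
    {α βmin βmax ϖ q s : ℝ} (hα₀ : 0 < α) (hα₁ : α ≤ 1) (hβmin : 0 < βmin) (hβ : βmin ≤ βmax)
    (hs : 0 ≤ s)
    {U B H P : Ω → ℝ} (hU : Measurable U) (hB : Measurable B) (hH : Measurable H)
    (hP : Measurable P)
    (hUdist : Measure.map U μ =
      (ENNReal.ofReal (1 - α)) • Measure.dirac (0 : ℝ) + (ENNReal.ofReal α) • Measure.dirac 1)
    (hBb : ∀ᵐ ω ∂μ, βmin ≤ B ω ∧ B ω ≤ βmax) (hBm : (∫ ω, B ω ∂μ) = ϖ)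
    (hHdist : Measure.map H μ = expMeasure 1)
    (hPb : ∀ᵐ ω ∂μ, 0 ≤ P ω ∧ P ω ≤ 1) (hPm : (∫ ω, P ω ∂μ) = q)
    (hWH : IndepFun (fun ω => (U ω, B ω, P ω)) H μ)
    (hUBP : IndepFun U (fun ω => B ω * P ω) μ)
    (hBP : IndepFun B P μ) :
    (∫ ω, rexp (-(s * (U ω * B ω * H ω * P ω))) ∂μ) ≤
      rexp (-(α * ϖ * q * s / (1 + βmax * s))) := by
  have hD : (0:ℝ) < 1 + βmax * s := by nlinarith
  set W : Ω → ℝ × ℝ × ℝ := fun ω => (U ω, B ω, P ω) with hWdef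
  have hWmeas : Measurable W := hU.prodMk (hB.prodMk hP)
  set ν : Measure (ℝ × ℝ × ℝ) := Measure.map W μ with hν
  haveI hνprob : IsProbabilityMeasure ν := Measure.isProbabilityMeasure_map hWmeas.aemeasurable
  haveI hmprob : IsProbabilityMeasure (expMeasure 1) := isProbabilityMeasure_expMeasure one_pos
  -- a.e. facts
  have hU01 : ∀ᵐ ω ∂μ, U ω ∈ ({0,1} : Set ℝ) := by
    have hm : MeasurableSet (({0,1} : Set ℝ)ᶜ) :=
      (by measurability : MeasurableSet ({0,1}:Set ℝ)).compl
    rw [ae_iff]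
    have h2 : {ω | ¬ U ω ∈ ({0,1}:Set ℝ)} = U ⁻¹' (({0,1}:Set ℝ)ᶜ) := rfl
    rw [h2, ← Measure.map_apply hU hm, hUdist, bern_compl]
  set A : Set (ℝ × ℝ × ℝ) := ({0,1} : Set ℝ) ×ˢ ((Icc βmin βmax) ×ˢ (Icc (0:ℝ) 1)) with hA
  have hAmeas : MeasurableSet A := by
    refine MeasurableSet.prod (by measurability) (measurableSet_Icc.prod measurableSet_Icc)
  have hAfacts : ∀ x : ℝ×ℝ×ℝ, x ∈ A →
      0 ≤ x.1 ∧ x.1 ≤ 1 ∧ 0 ≤ x.2.1 ∧ x.2.1 ≤ βmax ∧ 0 ≤ x.2.2 ∧ x.2.2 ≤ 1 := by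
    rintro ⟨x1, x2, x3⟩ hx
    simp only [hA, Set.mem_prod, Set.mem_insert_iff, Set.mem_singleton_iff, Set.mem_Icc] at hx
    obtain ⟨h1, ⟨h2a, h2b⟩, ⟨h3a, h3b⟩⟩ := hx
    rcases h1 with h1 | h1 <;> subst h1 <;>
      exact ⟨by norm_num, by norm_num, by linarith, h2b, h3a, h3b⟩
  have hWA : ∀ᵐ ω ∂μ, W ω ∈ A := by
    filter_upwards [hU01, hBb, hPb] with ω h1 h2 h3
    exact ⟨h1, ⟨h2.1, h2.2⟩, ⟨h3.1, h3.2⟩⟩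
  have hνA : ∀ᵐ x ∂ν, x ∈ A := (ae_map_iff hWmeas.aemeasurable hAmeas).mpr hWA
  have hm0 : (expMeasure 1) (Iio 0) = 0 := by
    rw [expMeasure_eq, withDensity_apply _ measurableSet_Iio]
    exact lintegral_exponentialPDF_of_nonpos le_rfl
  have hprodae : ∀ᵐ z ∂(ν.prod (expMeasure 1)), z.1 ∈ A ∧ 0 ≤ z.2 := by
    rw [ae_iff]
    have hset : {z : (ℝ×ℝ×ℝ)×ℝ | ¬(z.1 ∈ A ∧ 0 ≤ z.2)} = (A ×ˢ Ici 0)ᶜ := by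
      ext z; simp [Set.mem_prod]
    rw [hset, Set.compl_prod_eq_union]
    refine measure_union_null ?_ ?_
    · rw [Measure.prod_prod]
      have : ν Aᶜ = 0 := ae_iff.mp hνA
      rw [this, zero_mul]
    · rw [Measure.prod_prod, Set.compl_Ici, hm0, mul_zero]
  set F : (ℝ × ℝ × ℝ) × ℝ → ℝ := fun z => rexp (-(s * (z.1.1 * z.1.2.1 * z.2 * z.1.2.2)))
    with hF
  have hFmeas : Measurable F := by fun_prop
  have hint1 : (∫ ω, rexp (-(s * (U ω * B ω * H ω * P ω))) ∂μ)
      = ∫ z, F z ∂(ν.prod (expMeasure 1)) := by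
    have hmapeq : Measure.map (fun ω => (W ω, H ω)) μ = ν.prod (expMeasure 1) := by
      rw [hν, ← hHdist]
      exact (indepFun_iff_map_prod_eq_prod_map_map hWmeas.aemeasurable hH.aemeasurable).mp hWH
    rw [← hmapeq, integral_map (hWmeas.prodMk hH).aemeasurable hFmeas.aestronglyMeasurable]
  have hFint : Integrable F (ν.prod (expMeasure 1)) := by
    refine Integrable.mono' (integrable_const 1) hFmeas.aestronglyMeasurable ?_
    filter_upwards [hprodae] with z hz
    obtain ⟨k1, k2, k3, k4, k5, k6⟩ := hAfacts z.1 hz.1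
    rw [Real.norm_eq_abs, abs_of_pos (exp_pos _), Real.exp_le_one_iff]
    have : 0 ≤ z.1.1 * z.1.2.1 * z.2 * z.1.2.2 :=
      mul_nonneg (mul_nonneg (mul_nonneg k1 k3) hz.2) k5
    nlinarith
  rw [hint1, integral_prod _ hFint]
  set c0 : ℝ := s / (1 + βmax * s) with hc0
  have hinner : ∀ᵐ x ∂ν, (∫ y, F (x, y) ∂(expMeasure 1)) ≤ 1 - c0 * (x.1 * (x.2.1 * x.2.2)) := by
    filter_upwards [hνA] with x hx
    obtain ⟨k1, k2, k3, k4, k5, k6⟩ := hAfacts x hx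
    have hc : 0 ≤ x.1 * x.2.1 * x.2.2 * s :=
      mul_nonneg (mul_nonneg (mul_nonneg k1 k3) k5) hs
    have hFx : (∫ y, F (x, y) ∂(expMeasure 1))
        = ∫ y, rexp (-((x.1 * x.2.1 * x.2.2 * s) * y)) ∂(expMeasure 1) := by
      refine integral_congr_ae (ae_of_all _ fun y => ?_)
      simp only [hF]
      congr 1
      ring
    rw [hFx, mgf_exp hc]
    have hM : x.1 * x.2.1 * x.2.2 * s ≤ βmax * s := by
      refine mul_le_mul_of_nonneg_right ?_ hs
      calc x.1 * x.2.1 * x.2.2 ≤ x.1 * x.2.1 := mul_le_of_le_one_right (mul_nonneg k1 k3) k6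
        _ ≤ x.2.1 := mul_le_of_le_one_left k3 k2
        _ ≤ βmax := k4
    refine le_trans (one_div_bound hc hM) (le_of_eq ?_)
    rw [hc0]
    field_simp
  have hL : Integrable (fun x => ∫ y, F (x, y) ∂(expMeasure 1)) ν := hFint.integral_prod_left
  have hg_meas : Measurable (fun x : ℝ×ℝ×ℝ => x.1 * (x.2.1 * x.2.2)) := by fun_prop
  have hgint : Integrable (fun x : ℝ×ℝ×ℝ => x.1 * (x.2.1 * x.2.2)) ν := by
    refine Integrable.mono' (integrable_const (βmax : ℝ)) hg_meas.aestronglyMeasurable ?_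
    filter_upwards [hνA] with x hx
    obtain ⟨k1, k2, k3, k4, k5, k6⟩ := hAfacts x hx
    rw [Real.norm_eq_abs, abs_of_nonneg (mul_nonneg k1 (mul_nonneg k3 k5))]
    calc x.1 * (x.2.1 * x.2.2) ≤ x.2.1 * x.2.2 := mul_le_of_le_one_left (mul_nonneg k3 k5) k2
      _ ≤ x.2.1 := mul_le_of_le_one_right k3 k6
      _ ≤ βmax := k4
  have hR : Integrable (fun x => 1 - c0 * (x.1 * (x.2.1 * x.2.2))) ν :=
    (integrable_const 1).sub (hgint.const_mul c0)
  have step2 : (∫ x, ∫ y, F (x, y) ∂(expMeasure 1) ∂ν)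
      ≤ ∫ x, (1 - c0 * (x.1 * (x.2.1 * x.2.2))) ∂ν :=
    integral_mono_ae hL hR hinner
  have hgval : (∫ x, x.1 * (x.2.1 * x.2.2) ∂ν) = α * (ϖ * q) := by
    rw [hν, integral_map hWmeas.aemeasurable hg_meas.aestronglyMeasurable]
    have h1 : (∫ ω, U ω * (B ω * P ω) ∂μ) = (∫ ω, U ω ∂μ) * ∫ ω, B ω * P ω ∂μ :=
      hUBP.integral_fun_mul_eq_mul_integral hU.aestronglyMeasurable (hB.mul hP).aestronglyMeasurable
    have h2 : (∫ ω, B ω * P ω ∂μ) = (∫ ω, B ω ∂μ) * ∫ ω, P ω ∂μ :=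
      hBP.integral_fun_mul_eq_mul_integral hB.aestronglyMeasurable hP.aestronglyMeasurable
    have h3 : (∫ ω, U ω ∂μ) = α := by
      rw [show (∫ ω, U ω ∂μ) = ∫ x, x ∂(Measure.map U μ) from
        (integral_map hU.aemeasurable aestronglyMeasurable_id).symm, hUdist,
        bern_integral hα₀.le]
    exact h1.trans (by rw [h2, h3, hBm, hPm])
  have hRHSval : (∫ x, (1 - c0 * (x.1 * (x.2.1 * x.2.2))) ∂ν) = 1 - c0 * (α * (ϖ * q)) := by
    rw [integral_sub (integrable_const 1) (hgint.const_mul c0), integral_const,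
      integral_const_mul, hgval]
    simp
  refine le_trans step2 ?_
  rw [hRHSval]
  have hkey := Real.add_one_le_exp (-(α * ϖ * q * s / (1 + βmax * s)))
  have : 1 - c0 * (α * (ϖ * q)) = -(α * ϖ * q * s / (1 + βmax * s)) + 1 := by
    rw [hc0]; field_simp; ring
  linarith

end Helpers

/-- Laplace-transform bound on the aggregate interference (core of Theorem 4):
`u k` i.i.d. Bernoulli(α) (values in `{0,1}`), `b k` i.i.d. shadowing factors with
`0 < β_min ≤ b k ≤ β_max` a.s. and mean `ϖ`, `h k` i.i.d. standard exponential,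
`p k` i.i.d. powers in `[0,1]` with mean `q`, the four families mutually independent.
Then for `I = Σ_k u_k b_k h_k p_k` and every `s ≥ 0`,
`E[e^{-s I}] ≤ exp(−n α ϖ q s / (1 + β_max s))`. -/
theorem interference_laplace_bound
    {Ω : Type*} [MeasurableSpace Ω] (μ : Measure Ω) [IsProbabilityMeasure μ]
    (n : ℕ) (α : ℝ) (hα₀ : 0 < α) (hα₁ : α ≤ 1)
    (βmin βmax ϖ q : ℝ) (hβmin : 0 < βmin) (hβ : βmin ≤ βmax)
    (u b h p : Fin n → Ω → ℝ)
    (hu_meas : ∀ k, Measurable (u k)) (hb_meas : ∀ k, Measurable (b k))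
    (hh_meas : ∀ k, Measurable (h k)) (hp_meas : ∀ k, Measurable (p k))
    (hu_dist : ∀ k, Measure.map (u k) μ =
      (ENNReal.ofReal (1 - α)) • Measure.dirac (0 : ℝ) +
        (ENNReal.ofReal α) • Measure.dirac (1 : ℝ))
    (hb_bounds : ∀ k, ∀ᵐ ω ∂μ, βmin ≤ b k ω ∧ b k ω ≤ βmax)
    (hb_mean : ∀ k, (∫ ω, b k ω ∂μ) = ϖ)
    (hb_ident : ∀ k j, Measure.map (b k) μ = Measure.map (b j) μ)
    (hh_dist : ∀ k, Measure.map (h k) μ = expMeasure 1)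
    (hp_bounds : ∀ k, ∀ᵐ ω ∂μ, 0 ≤ p k ω ∧ p k ω ≤ 1)
    (hp_mean : ∀ k, (∫ ω, p k ω ∂μ) = q)
    (hp_ident : ∀ k j, Measure.map (p k) μ = Measure.map (p j) μ)
    (hindep : iIndepFun
      (fun i : Fin 4 × Fin n => ![u, b, h, p] i.1 i.2) μ) :
    ∀ s : ℝ, 0 ≤ s →
      (∫ ω, Real.exp (-(s * ∑ k : Fin n, u k ω * b k ω * h k ω * p k ω)) ∂μ) ≤
        Real.exp (-((n : ℝ) * α * ϖ * q * s) / (1 + βmax * s)) := by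
  intro s hs
  classical
  set f : Fin 4 × Fin n → Ω → ℝ := fun i => ![u, b, h, p] i.1 i.2 with hfdef
  have hf_meas : ∀ i, Measurable (f i) := by
    rintro ⟨i, k⟩
    fin_cases i
    · exact hu_meas k
    · exact hb_meas k
    · exact hh_meas k
    · exact hp_meas k
  set X : Fin n → Ω → ℝ := fun k ω => rexp (-(s * (u k ω * b k ω * h k ω * p k ω))) with hX
  have hXmeas : ∀ k, Measurable (X k) := by
    intro k
    apply Real.measurable_exp.comp
    exact ((((hu_meas k).mul (hb_meas k)).mul (hh_meas k)).mul (hp_meas k)).const_mul s |>.neg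
  have hterm : ∀ k, (∫ ω, X k ω ∂μ) ≤ rexp (-(α * ϖ * q * s / (1 + βmax * s))) := by
    intro k
    have hWH : IndepFun (fun ω => (u k ω, b k ω, p k ω)) (h k) μ := by
      have base := hindep.indepFun_finset
        ({((0:Fin 4),k),((1:Fin 4),k),((3:Fin 4),k)} : Finset (Fin 4 × Fin n))
        ({((2:Fin 4),k)} : Finset (Fin 4 × Fin n)) (by simp) hf_meas
      have hφ : Measurable (fun v :
          (({((0:Fin 4),k),((1:Fin 4),k),((3:Fin 4),k)} : Finset (Fin 4 × Fin n)) → ℝ) =>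
          ((v ⟨((0:Fin 4),k), by simp⟩, v ⟨((1:Fin 4),k), by simp⟩,
            v ⟨((3:Fin 4),k), by simp⟩) : ℝ × ℝ × ℝ)) :=
        (measurable_pi_apply _).prodMk
          ((measurable_pi_apply _).prodMk (measurable_pi_apply _))
      have hψ : Measurable (fun v :
          (({((2:Fin 4),k)} : Finset (Fin 4 × Fin n)) → ℝ) =>
          v ⟨((2:Fin 4),k), by simp⟩) := measurable_pi_apply _
      exact base.comp hφ hψ
    have hUBP : IndepFun (u k) (fun ω => b k ω * p k ω) μ :=
      hindep.indepFun_mul_right hf_meas ((0:Fin 4),k) ((1:Fin 4),k) ((3:Fin 4),k)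
        (by simp) (by simp)
    have hBP : IndepFun (b k) (p k) μ :=
      hindep.indepFun (show ((1:Fin 4),k) ≠ ((3:Fin 4),k) by simp)
    exact per_term μ hα₀ hα₁ hβmin hβ hs (hu_meas k) (hb_meas k) (hh_meas k) (hp_meas k)
      (hu_dist k) (hb_bounds k) (hb_mean k) (hh_dist k) (hp_bounds k) (hp_mean k)
      hWH hUBP hBP
  have hprod : ∀ T : Finset (Fin n),
      (∫ ω, ∏ j ∈ T, X j ω ∂μ) = ∏ j ∈ T, ∫ ω, X j ω ∂μ := by
    intro T
    induction T using Finset.induction_on with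
    | empty => simp
    | @insert k T hkT ih =>
      have hdisj : Disjoint ((Finset.univ : Finset (Fin 4)) ×ˢ {k})
          ((Finset.univ : Finset (Fin 4)) ×ˢ T) := by
        rw [Finset.disjoint_left]
        rintro ⟨i, j⟩ h1 h2
        simp only [Finset.mem_product, Finset.mem_singleton] at h1 h2
        exact hkT (h1.2 ▸ h2.2)
      have hIndep : IndepFun (X k) (fun ω => ∏ j ∈ T, X j ω) μ := by
        have base := hindep.indepFun_finset _ _ hdisj hf_meas
        have m0 : ((0:Fin 4),k) ∈ (Finset.univ : Finset (Fin 4)) ×ˢ ({k} : Finset (Fin n)) :=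
          Finset.mem_product.mpr ⟨Finset.mem_univ _, Finset.mem_singleton_self k⟩
        have m1 : ((1:Fin 4),k) ∈ (Finset.univ : Finset (Fin 4)) ×ˢ ({k} : Finset (Fin n)) :=
          Finset.mem_product.mpr ⟨Finset.mem_univ _, Finset.mem_singleton_self k⟩
        have m2 : ((2:Fin 4),k) ∈ (Finset.univ : Finset (Fin 4)) ×ˢ ({k} : Finset (Fin n)) :=
          Finset.mem_product.mpr ⟨Finset.mem_univ _, Finset.mem_singleton_self k⟩
        have m3 : ((3:Fin 4),k) ∈ (Finset.univ : Finset (Fin 4)) ×ˢ ({k} : Finset (Fin n)) :=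
          Finset.mem_product.mpr ⟨Finset.mem_univ _, Finset.mem_singleton_self k⟩
        have hφ₁ : Measurable (fun v :
            (((Finset.univ : Finset (Fin 4)) ×ˢ ({k} : Finset (Fin n))) → ℝ) =>
            rexp (-(s * (v ⟨((0:Fin 4),k), m0⟩ * v ⟨((1:Fin 4),k), m1⟩ *
              v ⟨((2:Fin 4),k), m2⟩ * v ⟨((3:Fin 4),k), m3⟩)))) := by fun_prop
        have hφ₂ : Measurable (fun v :
            (((Finset.univ : Finset (Fin 4)) ×ˢ T) → ℝ) =>
            ∏ j ∈ T.attach, rexp (-(s *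
              (v ⟨((0:Fin 4),j.1), Finset.mem_product.mpr ⟨Finset.mem_univ _, j.2⟩⟩ *
               v ⟨((1:Fin 4),j.1), Finset.mem_product.mpr ⟨Finset.mem_univ _, j.2⟩⟩ *
               v ⟨((2:Fin 4),j.1), Finset.mem_product.mpr ⟨Finset.mem_univ _, j.2⟩⟩ *
               v ⟨((3:Fin 4),j.1), Finset.mem_product.mpr ⟨Finset.mem_univ _, j.2⟩⟩)))) := by
          refine Finset.measurable_prod _ (fun j _ => ?_)
          fun_prop
        have h2 := base.comp hφ₁ hφ₂
        have e2 : ((fun v :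
            (((Finset.univ : Finset (Fin 4)) ×ˢ T) → ℝ) =>
            ∏ j ∈ T.attach, rexp (-(s *
              (v ⟨((0:Fin 4),j.1), Finset.mem_product.mpr ⟨Finset.mem_univ _, j.2⟩⟩ *
               v ⟨((1:Fin 4),j.1), Finset.mem_product.mpr ⟨Finset.mem_univ _, j.2⟩⟩ *
               v ⟨((2:Fin 4),j.1), Finset.mem_product.mpr ⟨Finset.mem_univ _, j.2⟩⟩ *
               v ⟨((3:Fin 4),j.1), Finset.mem_product.mpr ⟨Finset.mem_univ _, j.2⟩⟩))))
            ∘ (fun a (i : ((Finset.univ : Finset (Fin 4)) ×ˢ T)) => f i a))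
            = fun ω => ∏ j ∈ T, X j ω := by
          funext ω
          exact Finset.prod_attach T (fun j => X j ω)
        rw [e2] at h2
        exact h2
      have hPmeas : Measurable (fun ω => ∏ j ∈ T, X j ω) :=
        Finset.measurable_prod _ (fun j _ => hXmeas j)
      calc (∫ ω, ∏ j ∈ insert k T, X j ω ∂μ)
          = ∫ ω, X k ω * ∏ j ∈ T, X j ω ∂μ := by simp_rw [Finset.prod_insert hkT]
        _ = (∫ ω, X k ω ∂μ) * ∫ ω, ∏ j ∈ T, X j ω ∂μ :=
            hIndep.integral_fun_mul_eq_mul_integral (hXmeas k).aestronglyMeasurable hPmeas.aestronglyMeasurable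
        _ = ∏ j ∈ insert k T, ∫ ω, X j ω ∂μ := by
            rw [ih, Finset.prod_insert hkT]
  have hrw : (∫ ω, Real.exp (-(s * ∑ k : Fin n, u k ω * b k ω * h k ω * p k ω)) ∂μ)
      = ∫ ω, ∏ k : Fin n, X k ω ∂μ := by
    refine integral_congr_ae (ae_of_all _ fun ω => ?_)
    show rexp (-(s * ∑ k : Fin n, u k ω * b k ω * h k ω * p k ω))
      = ∏ k : Fin n, rexp (-(s * (u k ω * b k ω * h k ω * p k ω)))
    rw [← Real.exp_sum]
    congr 1
    simp [Finset.mul_sum]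
  rw [hrw, hprod Finset.univ]
  calc (∏ k : Fin n, ∫ ω, X k ω ∂μ)
      ≤ ∏ _k : Fin n, rexp (-(α * ϖ * q * s / (1 + βmax * s))) :=
        Finset.prod_le_prod (fun i _ => integral_nonneg fun ω => (exp_pos _).le)
          (fun i _ => hterm i)
    _ = rexp (-(α * ϖ * q * s / (1 + βmax * s))) ^ n := by
        rw [Finset.prod_const, Finset.card_univ, Fintype.card_fin]
    _ = Real.exp (-((n : ℝ) * α * ϖ * q * s) / (1 + βmax * s)) := by
        rw [← Real.exp_nat_mul]
        congr 1
        ring
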